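/- Let A be an n×n matrix and B an m×m matrix over the max-plus semiring with A⊗x = λ⊗x and B⊗y = μ⊗y for vectors x ≠ ε, y ≠ ε. Then for any α, β ∈ ℝ, the scalar max(α+λ, β+μ) is an eigenvalue of the matrix α⊗(A⊠I_m) ⊕ β⊗(I_n⊠B), with eigenvector x⊠y; here I_n, I_m are unit matrices of orders n and m. -/

import Mathlib

/-!  Max-plus (tropical) semiring `MP = ℝ ∪ {ε}`, `ε = -∞ = ⊥`,
`a ⊕ b = max a b` and `a ⊗ b = a + b`. -/

abbrev MP := WithBot ℝ

/-- Tropical (max-plus) matrix product: `(A ⊗ B) i j = max_k (A i k + B k j)`. -/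
noncomputable def mpMul {α β γ : Type*} [Fintype β] (A : Matrix α β MP) (B : Matrix β γ MP) :
    Matrix α γ MP :=
  fun i j => Finset.univ.sup fun k => A i k + B k j

/-- Tropical matrix-vector product: `(A ⊗ x) i = max_k (A i k + x k)`. -/
noncomputable def mpMulVec {α β : Type*} [Fintype β] (A : Matrix α β MP) (x : β → MP) : α → MP :=
  fun i => Finset.univ.sup fun k => A i k + x k

/-- Diagonal matrix with finite diagonal entries `d i` and off-diagonal entries `ε`. -/
noncomputable def mpDiag {α : Type*} [DecidableEq α] (d : α → ℝ) : Matrix α α MP :=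
  fun i j => if i = j then (d i : MP) else ⊥

/-- Tropical permanent: `maper A = max_{π} Σ_i A i (π i)`. -/
noncomputable def maper {α : Type*} [Fintype α] [DecidableEq α] (A : Matrix α α MP) : MP :=
  Finset.univ.sup fun π : Equiv.Perm α => ∑ i, A i (π i)

/-- Maximum cycle mean:
`λ(A) = sup { (A i₁ i₂ + A i₂ i₃ + ⋯ + A iₖ i₁)/k : k ≥ 1, i₁,…,iₖ }` (`ε` if none finite). -/
noncomputable def mcm {α : Type*} [Fintype α] (A : Matrix α α MP) : MP :=
  sSup {x : MP | ∃ k : ℕ, ∃ hk : 0 < k, ∃ f : Fin k → α,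
    x = WithBot.map (fun w : ℝ => w / (k : ℝ))
      (∑ i : Fin k, A (f i) (f ⟨(i.1 + 1) % k, Nat.mod_lt _ hk⟩))}

/-- Tropical tensor product `A ⊠ B`: the block matrix whose `(k,l)` block is `A ⊗ B k l`;
the row index `(k, i)` denotes position `i` inside block row `k`. -/
noncomputable def mpTensor {α β γ δ : Type*} (A : Matrix α β MP) (B : Matrix γ δ MP) :
    Matrix (γ × α) (δ × β) MP :=
  fun p q => A p.2 q.2 + B p.1 q.1

/-- Tensor product of column vectors: `(x ⊠ y) (k, i) = x i + y k`. -/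
noncomputable def mpTensorVec {α γ : Type*} (x : α → MP) (y : γ → MP) : γ × α → MP :=
  fun p => x p.2 + y p.1

/-- The tropical unit matrix: `0` on the diagonal, `ε` elsewhere. -/
noncomputable def mpUnit (α : Type*) [DecidableEq α] : Matrix α α MP :=
  fun i j => if i = j then 0 else ⊥

/-- `vec X`: the columns of `X` stacked; component `(c, r)` is `X r c`. -/
def mpVec {α β : Type*} (X : Matrix α β MP) : β × α → MP := fun p => X p.2 p.1


lemma mp_sup_max {ι : Type*} (s : Finset ι) (f g : ι → MP) :
    s.sup (fun q => max (f q) (g q)) = max (s.sup f) (s.sup g) := by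
  apply le_antisymm
  · exact Finset.sup_le fun q hq => max_le_max (Finset.le_sup hq) (Finset.le_sup hq)
  · exact max_le (Finset.sup_mono_fun fun q _ => le_max_left _ _)
      (Finset.sup_mono_fun fun q _ => le_max_right _ _)

lemma mp_sup_add {ι : Type*} (s : Finset ι) (hs : s.Nonempty) (f : ι → MP) (c : MP) :
    s.sup (fun i => f i + c) = s.sup f + c := by
  apply le_antisymm
  · exact Finset.sup_le fun i hi => add_le_add_left (Finset.le_sup hi) c
  · obtain ⟨i0, hi0, h⟩ := Finset.exists_mem_eq_sup s hs f
    rw [h]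
    exact Finset.le_sup (f := fun i => f i + c) hi0

lemma mp_max_add (c d t : MP) : max (c + t) (d + t) = max c d + t := by
  rcases le_total c d with h | h
  · rw [max_eq_right h, max_eq_right (add_le_add_left h t)]
  · rw [max_eq_left h, max_eq_left (add_le_add_left h t)]

lemma mp_sup_diag {γ α : Type*} [Fintype γ] [Fintype α] (k : γ)
    (f : γ × α → MP) (hbot : ∀ q : γ × α, q.1 ≠ k → f q = ⊥) :
    Finset.univ.sup f = Finset.univ.sup (fun j : α => f (k, j)) := by
  apply le_antisymm
  · apply Finset.sup_le
    rintro ⟨l, j⟩ _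
    by_cases h : l = k
    · rw [h]; exact Finset.le_sup (f := fun j => f (k, j)) (Finset.mem_univ j)
    · rw [hbot (l, j) h]; exact bot_le
  · exact Finset.sup_le fun j _ => Finset.le_sup (Finset.mem_univ (k, j))


lemma mp_sup_diag2 {γ α : Type*} [Fintype γ] [Fintype α] (i : α)
    (f : γ × α → MP) (hbot : ∀ q : γ × α, q.2 ≠ i → f q = ⊥) :
    Finset.univ.sup f = Finset.univ.sup (fun l : γ => f (l, i)) := by
  apply le_antisymm
  · apply Finset.sup_le
    rintro ⟨l, j⟩ _
    by_cases h : j = i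
    · rw [h]; exact Finset.le_sup (f := fun l => f (l, i)) (Finset.mem_univ l)
    · rw [hbot (l, j) h]; exact bot_le
  · exact Finset.sup_le fun l _ => Finset.le_sup (Finset.mem_univ (l, i))


/-- If `A ⊗ x = λ ⊗ x`, `B ⊗ y = μ ⊗ y` with `x ≠ ε`, `y ≠ ε`, then for any
`α, β ∈ ℝ` the scalar `max (α + λ) (β + μ)` is an eigenvalue of
`α ⊗ (A ⊠ I_m) ⊕ β ⊗ (I_n ⊠ B)` with eigenvector `x ⊠ y`. -/
theorem tensor_sum_eigenvalue (n m : ℕ)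
    (A : Matrix (Fin n) (Fin n) MP) (B : Matrix (Fin m) (Fin m) MP)
    (x : Fin n → MP) (y : Fin m → MP) (l μ : MP)
    (hx0 : ∃ i, x i ≠ ⊥) (hy0 : ∃ k, y k ≠ ⊥)
    (hx : mpMulVec A x = fun i => l + x i)
    (hy : mpMulVec B y = fun k => μ + y k)
    (a b : ℝ) :
    (∃ p, mpTensorVec x y p ≠ ⊥) ∧
      mpMulVec
        (fun p q => max ((a : MP) + mpTensor A (mpUnit (Fin m)) p q)
                        ((b : MP) + mpTensor (mpUnit (Fin n)) B p q))
        (mpTensorVec x y)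
      = fun p => max ((a : MP) + l) ((b : MP) + μ) + mpTensorVec x y p := by
  obtain ⟨i0, hi0⟩ := hx0
  obtain ⟨k0, hk0⟩ := hy0
  have hnen : (Finset.univ : Finset (Fin n)).Nonempty := ⟨i0, Finset.mem_univ _⟩
  have hnem : (Finset.univ : Finset (Fin m)).Nonempty := ⟨k0, Finset.mem_univ _⟩
  constructor
  · exact ⟨(k0, i0), by simp [mpTensorVec, WithBot.add_eq_bot, hi0, hk0]⟩
  · funext p
    obtain ⟨k, i⟩ := p
    have hxi := congrFun hx i
    have hyk := congrFun hy k
    simp only [mpMulVec] at hxi hyk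
    simp only [mpMulVec, mpTensor, mpTensorVec, mpUnit]
    simp only [← mp_max_add]
    rw [mp_sup_max]
    have h1 : (Finset.univ.sup fun q : Fin m × Fin n =>
        ((a : MP) + (A i q.2 + if k = q.1 then 0 else ⊥)) + (x q.2 + y q.1))
        = ((a : MP) + l) + (x i + y k) := by
      rw [mp_sup_diag k _ (by
        rintro ⟨l', j⟩ h
        simp only [if_neg (Ne.symm h), WithBot.add_bot, WithBot.bot_add])]
      simp only [eq_self_iff_true, if_true]
      have e : ∀ j : Fin n, ((a : MP) + (A i j + 0)) + (x j + y k)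
          = (A i j + x j) + ((a : MP) + y k) := by
        intro j
        rw [add_zero]
        abel
      simp only [e]
      rw [mp_sup_add _ hnen, hxi]
      abel
    have h2 : (Finset.univ.sup fun q : Fin m × Fin n =>
        ((b : MP) + ((if i = q.2 then 0 else ⊥) + B k q.1)) + (x q.2 + y q.1))
        = ((b : MP) + μ) + (x i + y k) := by
      rw [mp_sup_diag2 i _ (by
        rintro ⟨l', j⟩ h
        simp only [if_neg (Ne.symm h), WithBot.bot_add, WithBot.add_bot])]
      simp only [eq_self_iff_true, if_true]
      have e : ∀ l' : Fin m, ((b : MP) + ((0 : MP) + B k l')) + (x i + y l')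
          = (B k l' + y l') + ((b : MP) + x i) := by
        intro l'
        rw [zero_add]
        abel
      simp only [e]
      rw [mp_sup_add _ hnem, hyk]
      abel
    rw [h1, h2, mp_max_add]
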